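/- arXiv:0811.0523 — 4 statements merged into one kernel-verified Lean document; each statement's English description precedes it below -/
import Mathlib

section
/- Let A be the 5×6 matrix over ℂ[X₀,…,X₅] whose rows are (X₁, −X₀, 0, 0, 0, 0), (−X₅, X₂, −X₁, 0, 0, X₀), (0, 0, X₃, −X₂, 0, 0), (0, 0, 0, X₄, −X₃, 0), (0, 0, 0, 0, X₅, −X₄). Then for each i ∈ {0,…,5} there is a sign ε ∈ {1, −1} such that the determinant of the 5×5 submatrix of A obtained by deleting the i-th column equals ε · Xᵢ · (X₁X₂X₃X₄ − X₀X₃X₄X₅). In particular the ideal of 5×5 minors of A is generated by the six quartics Xᵢ·(X₁X₂X₃X₄ − X₀X₃X₄X₅), i = 0,…,5. -/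
open MvPolynomial

noncomputable section

/-- The polynomial ring `ℂ[X₀,…,X₅]`. -/
abbrev R6 : Type := MvPolynomial (Fin 6) ℂ

/-- The special quartic `W_M = X₁X₂X₃X₄ − X₀X₃X₄X₅`. -/
def WM : R6 := X 1 * X 2 * X 3 * X 4 - X 0 * X 3 * X 4 * X 5

/-- The `5×6` matrix of linear forms representing the bundle map `φ_M`. -/
def AM : Matrix (Fin 5) (Fin 6) R6 :=
  !![X 1, -X 0, 0, 0, 0, 0;
     -X 5, X 2, -X 1, 0, 0, X 0;
     0, 0, X 3, -X 2, 0, 0;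
     0, 0, 0, X 4, -X 3, 0;
     0, 0, 0, 0, X 5, -X 4]

private lemma w0 : Fin.castSucc ((0:Fin 2)) = (0:Fin 3) := rfl
private lemma w1 : Fin.castSucc ((0:Fin 2).succ) = (1:Fin 4) := rfl
private lemma w2 : Fin.castSucc ((0:Fin 2).succ.succ) = (2:Fin 5) := rfl
private lemma w3 : Fin.castSucc ((0:Fin 2).succ.succ.succ) = (3:Fin 6) := rfl
private lemma w4 : Fin.castSucc ((1:Fin 2)) = (1:Fin 3) := rfl
private lemma w5 : Fin.castSucc ((1:Fin 2).succ) = (2:Fin 4) := rfl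
private lemma w6 : Fin.castSucc ((1:Fin 2).succ.succ) = (3:Fin 5) := rfl
private lemma w7 : Fin.castSucc ((1:Fin 2).succ.succ.succ) = (4:Fin 6) := rfl
private lemma w8 : Fin.castSucc ((0:Fin 3)) = (0:Fin 4) := rfl
private lemma w9 : Fin.castSucc ((0:Fin 3).succ) = (1:Fin 5) := rfl
private lemma w10 : Fin.castSucc ((0:Fin 3).succ.succ) = (2:Fin 6) := rfl
private lemma w11 : Fin.castSucc ((1:Fin 3)) = (1:Fin 4) := rfl
private lemma w12 : Fin.castSucc ((1:Fin 3).succ) = (2:Fin 5) := rfl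
private lemma w13 : Fin.castSucc ((1:Fin 3).succ.succ) = (3:Fin 6) := rfl
private lemma w14 : Fin.castSucc ((2:Fin 3)) = (2:Fin 4) := rfl
private lemma w15 : Fin.castSucc ((2:Fin 3).succ) = (3:Fin 5) := rfl
private lemma w16 : Fin.castSucc ((2:Fin 3).succ.succ) = (4:Fin 6) := rfl
private lemma w17 : Fin.castSucc ((0:Fin 4)) = (0:Fin 5) := rfl
private lemma w18 : Fin.castSucc ((0:Fin 4).succ) = (1:Fin 6) := rfl
private lemma w19 : Fin.castSucc ((1:Fin 4)) = (1:Fin 5) := rfl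
private lemma w20 : Fin.castSucc ((1:Fin 4).succ) = (2:Fin 6) := rfl
private lemma w21 : Fin.castSucc ((2:Fin 4)) = (2:Fin 5) := rfl
private lemma w22 : Fin.castSucc ((2:Fin 4).succ) = (3:Fin 6) := rfl
private lemma w23 : Fin.castSucc ((3:Fin 4)) = (3:Fin 5) := rfl
private lemma w24 : Fin.castSucc ((3:Fin 4).succ) = (4:Fin 6) := rfl
private lemma w25 : Fin.castSucc ((0:Fin 5)) = (0:Fin 6) := rfl
private lemma w26 : Fin.castSucc ((1:Fin 5)) = (1:Fin 6) := rfl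
private lemma w27 : Fin.castSucc ((2:Fin 5)) = (2:Fin 6) := rfl
private lemma w28 : Fin.castSucc ((3:Fin 5)) = (3:Fin 6) := rfl
private lemma w29 : Fin.castSucc ((4:Fin 5)) = (4:Fin 6) := rfl
private lemma v0 : ((0:Fin 6):ℕ) = 0 := rfl
private lemma v1 : ((1:Fin 6):ℕ) = 1 := rfl
private lemma v2 : ((2:Fin 6):ℕ) = 2 := rfl
private lemma v3 : ((3:Fin 6):ℕ) = 3 := rfl
private lemma v4 : ((4:Fin 6):ℕ) = 4 := rfl
private lemma v5 : ((5:Fin 6):ℕ) = 5 := rfl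
set_option maxHeartbeats 2000000 in
private lemma keyAM (i : Fin 6) : ∃ ε : R6, (ε = 1 ∨ ε = -1) ∧
    (AM.submatrix id i.succAbove).det = ε * (X i * WM) := by
  fin_cases i
  · exact ⟨-1, Or.inr rfl, by
      simp [AM, WM, Matrix.det_succ_row_zero, Fin.sum_univ_succ, Fin.succAbove, w0, w1, w2, w3, w4, w5, w6, w7, w8, w9, w10, w11, w12, w13, w14, w15, w16, w17, w18, w19, w20, w21, w22, w23, w24, w25, w26, w27, w28, w29, v0, v1, v2, v3, v4, v5]; ring⟩
  · exact ⟨1, Or.inl rfl, by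
      simp [AM, WM, Matrix.det_succ_row_zero, Fin.sum_univ_succ, Fin.succAbove, w0, w1, w2, w3, w4, w5, w6, w7, w8, w9, w10, w11, w12, w13, w14, w15, w16, w17, w18, w19, w20, w21, w22, w23, w24, w25, w26, w27, w28, w29, v0, v1, v2, v3, v4, v5]; ring⟩
  · exact ⟨-1, Or.inr rfl, by
      simp [AM, WM, Matrix.det_succ_row_zero, Fin.sum_univ_succ, Fin.succAbove, w0, w1, w2, w3, w4, w5, w6, w7, w8, w9, w10, w11, w12, w13, w14, w15, w16, w17, w18, w19, w20, w21, w22, w23, w24, w25, w26, w27, w28, w29, v0, v1, v2, v3, v4, v5]; ring⟩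
  · exact ⟨1, Or.inl rfl, by
      simp [AM, WM, Matrix.det_succ_row_zero, Fin.sum_univ_succ, Fin.succAbove, w0, w1, w2, w3, w4, w5, w6, w7, w8, w9, w10, w11, w12, w13, w14, w15, w16, w17, w18, w19, w20, w21, w22, w23, w24, w25, w26, w27, w28, w29, v0, v1, v2, v3, v4, v5]; ring⟩
  · exact ⟨-1, Or.inr rfl, by
      simp [AM, WM, Matrix.det_succ_row_zero, Fin.sum_univ_succ, Fin.succAbove, w0, w1, w2, w3, w4, w5, w6, w7, w8, w9, w10, w11, w12, w13, w14, w15, w16, w17, w18, w19, w20, w21, w22, w23, w24, w25, w26, w27, w28, w29, v0, v1, v2, v3, v4, v5]; ring⟩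
  · exact ⟨1, Or.inl rfl, by
      simp [AM, WM, Matrix.det_succ_row_zero, Fin.sum_univ_succ, Fin.succAbove, w0, w1, w2, w3, w4, w5, w6, w7, w8, w9, w10, w11, w12, w13, w14, w15, w16, w17, w18, w19, w20, w21, w22, w23, w24, w25, w26, w27, w28, w29, v0, v1, v2, v3, v4, v5]; ring⟩

/-- The `5×5` minor of `AM` obtained by deleting the `i`-th column equals
`± Xᵢ·(X₁X₂X₃X₄ − X₀X₃X₄X₅)`; in particular the ideal of `5×5` minors of `AM`
is generated by the six quartics `Xᵢ·W_M`. -/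
theorem stmt1 :
    (∀ i : Fin 6, ∃ ε : R6, (ε = 1 ∨ ε = -1) ∧
      (AM.submatrix id i.succAbove).det = ε * (X i * WM)) ∧
    Ideal.span (Set.range fun i : Fin 6 => (AM.submatrix id i.succAbove).det) =
      Ideal.span (Set.range fun i : Fin 6 => X i * WM) := by
  refine ⟨keyAM, le_antisymm ?_ ?_⟩
  · rw [Ideal.span_le]
    rintro _ ⟨i, rfl⟩
    dsimp only
    obtain ⟨ε, hε, h⟩ := keyAM i
    rw [h]
    exact Ideal.mul_mem_left _ ε (Ideal.subset_span ⟨i, rfl⟩)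
  · rw [Ideal.span_le]
    rintro _ ⟨i, rfl⟩
    dsimp only
    obtain ⟨ε, hε, h⟩ := keyAM i
    have : X i * WM = ε * (AM.submatrix id i.succAbove).det := by
      rw [h]; rcases hε with rfl | rfl <;> ring
    rw [this]
    exact Ideal.mul_mem_left _ ε (Ideal.subset_span ⟨i, rfl⟩)

end
end

section
/- Let W and W′ be quartic forms in ℂ[X₀,…,X₅]. Assume that the 21 second partial derivatives ∂²W/∂Xᵢ∂Xⱼ (0 ≤ i ≤ j ≤ 5) of W are linearly independent over ℂ, and that the jacobian spaces coincide: JW′ = JW. Then there exists a nonzero scalar α ∈ ℂ with W′ = α·W; that is, a quartic whose second partials are linearly independent is uniquely determined, up to scalar, by its jacobian space. -/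
open MvPolynomial

noncomputable section

/-- The jacobian space of a polynomial: the `ℂ`-span of its six first partial
derivatives. -/
def jacSpace (F : R6) : Submodule ℂ R6 :=
  Submodule.span ℂ (Set.range fun i : Fin 6 => pderiv i F)


-- commutativity of pderiv
lemma pderiv_comm' (i j : Fin 6) (F : R6) :
    pderiv i (pderiv j F) = pderiv j (pderiv i F) := by
  induction F using MvPolynomial.induction_on' with
  | monomial d c =>
    simp only [pderiv_monomial]
    rcases eq_or_ne i j with rfl | hij
    · rfl
    · rw [tsub_right_comm]
      congr 1
      rw [Finsupp.tsub_apply, Finsupp.tsub_apply, Finsupp.single_eq_of_ne' hij,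
        Finsupp.single_eq_of_ne' (Ne.symm hij), tsub_zero, tsub_zero]
      push_cast
      ring
  | add p q hp hq => simp [map_add, hp, hq]

-- Euler's identity for monomials
lemma euler_monomial (d : Fin 6 →₀ ℕ) (c : ℂ) :
    ∑ i : Fin 6, X i * pderiv i (monomial d c) = (∑ i : Fin 6, d i) • monomial d c := by
  have key : ∀ i : Fin 6, X i * pderiv i (monomial d c) = monomial d (c * (d i : ℂ)) := by
    intro i
    rw [pderiv_monomial]
    rcases Nat.eq_zero_or_pos (d i) with h | h
    · simp [h]
    · rw [X, monomial_mul, one_mul]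
      have he : (Finsupp.single i 1) + (d - Finsupp.single i 1) = d := by
        ext k
        rcases eq_or_ne k i with rfl | hk
        · simp only [Finsupp.add_apply, Finsupp.tsub_apply, Finsupp.single_eq_same]
          omega
        · simp [Finsupp.single_eq_of_ne' (Ne.symm hk), Finsupp.tsub_apply]
      rw [he]
  simp_rw [key, ← map_sum (monomial d) _ Finset.univ, ← Finset.mul_sum,
    ← Nat.cast_smul_eq_nsmul ℂ, smul_monomial, smul_eq_mul, Nat.cast_sum, mul_comm]

lemma euler (n : ℕ) (F : R6) (h : F.IsHomogeneous n) :
    ∑ i : Fin 6, X i * pderiv i F = (n : ℂ) • F := by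
  have key : ∀ d ∈ F.support, ∑ i : Fin 6, X i * pderiv i (monomial d (coeff d F))
      = (n : ℂ) • monomial d (coeff d F) := by
    intro d hd
    rw [euler_monomial]
    have hw : ∑ i : Fin 6, d i = n := by
      have h1 := h (mem_support_iff.mp hd)
      rw [show (1 : Fin 6 → ℕ) = fun _ => 1 from rfl, ← Finsupp.degree_eq_weight_one] at h1
      rw [← h1, Finsupp.degree]
      exact (Finset.sum_subset (Finset.subset_univ _)
        (fun x _ hx => Finsupp.notMem_support_iff.mp hx)).symm
    rw [hw, ← Nat.cast_smul_eq_nsmul ℂ]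
  calc ∑ i : Fin 6, X i * pderiv i F
      = ∑ d ∈ F.support, ∑ i : Fin 6, X i * pderiv i (monomial d (coeff d F)) := by
        conv_lhs => rw [F.as_sum]
        simp_rw [map_sum, Finset.mul_sum]
        rw [Finset.sum_comm]
    _ = ∑ d ∈ F.support, (n : ℂ) • monomial d (coeff d F) := Finset.sum_congr rfl key
    _ = (n : ℂ) • F := by rw [← Finset.smul_sum, ← F.as_sum]

def sortPair (x : Fin 6 × Fin 6) : {p : Fin 6 × Fin 6 // p.1 ≤ p.2} :=
  if h : x.1 ≤ x.2 then ⟨x, h⟩ else ⟨(x.2, x.1), le_of_not_ge h⟩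

lemma sortPair_eq_sortPair_iff (a b u v : Fin 6) :
    sortPair (a, b) = sortPair (u, v) ↔ (a = u ∧ b = v) ∨ (a = v ∧ b = u) := by
  unfold sortPair
  dsimp only
  split_ifs <;> simp only [Subtype.mk.injEq, Prod.mk.injEq] <;> omega

lemma fiber_pair (u v : Fin 6) (h : u ≠ v) :
    Finset.univ.filter (fun x => sortPair x = sortPair (u, v)) = {(u, v), (v, u)} := by
  ext ⟨a, b⟩
  simp only [Finset.mem_filter, Finset.mem_univ, true_and, Finset.mem_insert,
    Finset.mem_singleton, Prod.mk.injEq, sortPair_eq_sortPair_iff]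

lemma fiber_diag (u : Fin 6) :
    Finset.univ.filter (fun x => sortPair x = sortPair (u, u)) = {(u, u)} := by
  ext ⟨a, b⟩
  simp only [Finset.mem_filter, Finset.mem_univ, true_and, Finset.mem_singleton,
    Prod.mk.injEq, sortPair_eq_sortPair_iff]
  omega

/-- A quartic form whose 21 second partial derivatives are linearly independent
is determined, up to a nonzero scalar, by its jacobian space. -/
theorem stmt3 (W W' : R6) (hW : W.IsHomogeneous 4) (hW' : W'.IsHomogeneous 4)
    (hind : LinearIndependent ℂ
      (fun p : {p : Fin 6 × Fin 6 // p.1 ≤ p.2} => pderiv p.1.1 (pderiv p.1.2 W)))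
    (hJ : jacSpace W' = jacSpace W) :
    ∃ α : ℂ, α ≠ 0 ∧ W' = α • W := by
  classical
  set f : {p : Fin 6 × Fin 6 // p.1 ≤ p.2} → R6 :=
    fun p => pderiv p.1.1 (pderiv p.1.2 W) with hf
  have f_sort : ∀ a b : Fin 6, pderiv a (pderiv b W) = f (sortPair (a, b)) := by
    intro a b
    unfold sortPair
    dsimp only
    split_ifs with h
    · rfl
    · exact pderiv_comm' a b W
  -- coefficients A
  have hex : ∀ i : Fin 6, ∃ c : Fin 6 → ℂ, ∑ k, c k • pderiv k W = pderiv i W' := by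
    intro i
    refine (Submodule.mem_span_range_iff_exists_fun ℂ).mp ?_
    show pderiv i W' ∈ jacSpace W
    rw [← hJ]
    exact Submodule.subset_span ⟨i, rfl⟩
  choose A hA using hex
  -- the symmetry relation
  have hrel : ∀ i j : Fin 6, ∑ k, A i k • f (sortPair (j, k)) = ∑ k, A j k • f (sortPair (i, k)) := by
    intro i j
    have h1 : pderiv j (pderiv i W') = ∑ k, A i k • f (sortPair (j, k)) := by
      rw [← hA i, map_sum]
      refine Finset.sum_congr rfl fun k _ => ?_
      rw [Derivation.map_smul, f_sort]
    have h2 : pderiv i (pderiv j W') = ∑ k, A j k • f (sortPair (i, k)) := by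
      rw [← hA j, map_sum]
      refine Finset.sum_congr rfl fun k _ => ?_
      rw [Derivation.map_smul, f_sort]
    rw [← h1, ← h2, pderiv_comm']
  -- key structure of A
  have key : ∀ i j : Fin 6, i ≠ j → A j i = 0 ∧ A j j = A i i := by
    intro i j hij
    set c : Fin 6 × Fin 6 → ℂ :=
      fun x => (if x.1 = i then A j x.2 else 0) - (if x.1 = j then A i x.2 else 0) with hc
    have h1 : ∑ x : Fin 6 × Fin 6, (if x.1 = i then A j x.2 else 0) • f (sortPair x)
        = ∑ k, A j k • f (sortPair (i, k)) := by
      rw [Fintype.sum_prod_type]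
      refine (Finset.sum_eq_single i (fun a _ ha => by simp [ha]) (by simp)).trans (by simp)
    have h2 : ∑ x : Fin 6 × Fin 6, (if x.1 = j then A i x.2 else 0) • f (sortPair x)
        = ∑ k, A i k • f (sortPair (j, k)) := by
      rw [Fintype.sum_prod_type]
      refine (Finset.sum_eq_single j (fun a _ ha => by simp [ha]) (by simp)).trans (by simp)
    have hsum : ∑ x : Fin 6 × Fin 6, c x • f (sortPair x) = 0 := by
      simp only [hc, sub_smul]
      rw [Finset.sum_sub_distrib, h1, h2, hrel i j, sub_self]
    have hfib : ∀ p, (∑ x ∈ Finset.univ.filter (fun x => sortPair x = p), c x) = 0 := by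
      have := Fintype.linearIndependent_iff.mp hind
        (fun p => ∑ x ∈ Finset.univ.filter (fun x => sortPair x = p), c x) ?_
      · exact this
      · rw [← hsum, ← Finset.sum_fiberwise Finset.univ sortPair (fun x => c x • f (sortPair x))]
        refine Finset.sum_congr rfl fun p _ => ?_
        rw [Finset.sum_smul]
        refine Finset.sum_congr rfl fun x hx => ?_
        rw [(Finset.mem_filter.mp hx).2]
    constructor
    · have := hfib (sortPair (i, i))
      rw [fiber_diag, Finset.sum_singleton] at this
      simpa [hc, hij] using this
    · have := hfib (sortPair (i, j))
      rw [fiber_pair i j hij, Finset.sum_pair (by simp [Prod.ext_iff]; omega)] at this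
      have h3 : A j j - A i i = 0 := by simpa [hc, hij, Ne.symm hij, sub_eq_add_neg] using this
      exact sub_eq_zero.mp h3
  set α : ℂ := A 0 0 with hα
  have hdiag : ∀ i, A i i = α := by
    intro i
    rcases eq_or_ne (0 : Fin 6) i with rfl | h
    · rfl
    · exact (key 0 i h).2
  have hoff : ∀ i k : Fin 6, k ≠ i → A i k = 0 := fun i k h => (key k i h).1
  have hpd : ∀ i, pderiv i W' = α • pderiv i W := by
    intro i
    rw [← hA i]
    rw [Finset.sum_eq_single i (fun k _ hk => by rw [hoff i k hk, zero_smul]) (by simp),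
      hdiag i]
  -- Euler
  have hE : ((4 : ℕ) : ℂ) • W' = ((4 : ℕ) : ℂ) • (α • W) := by
    rw [← euler 4 W' hW']
    calc ∑ i : Fin 6, X i * pderiv i W'
        = ∑ i : Fin 6, α • (X i * pderiv i W) := by
          refine Finset.sum_congr rfl fun i _ => ?_
          rw [hpd i, mul_smul_comm]
      _ = α • (((4 : ℕ) : ℂ) • W) := by rw [← Finset.smul_sum, euler 4 W hW]
      _ = ((4 : ℕ) : ℂ) • (α • W) := smul_comm _ _ _
  have hW'eq : W' = α • W := smul_right_injective R6 (by norm_num : ((4 : ℕ) : ℂ) ≠ 0) hE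
  refine ⟨α, ?_, hW'eq⟩
  intro h0
  rw [h0, zero_smul] at hW'eq
  have hbot : jacSpace W = ⊥ := by
    rw [← hJ, hW'eq]
    refine Submodule.span_eq_bot.mpr ?_
    rintro x ⟨i, rfl⟩
    simp
  have hWz : pderiv (0 : Fin 6) W = 0 := by
    have : pderiv (0 : Fin 6) W ∈ jacSpace W := Submodule.subset_span ⟨0, rfl⟩
    rwa [hbot, Submodule.mem_bot] at this
  have := hind.ne_zero ⟨((0 : Fin 6), (0 : Fin 6)), le_refl _⟩
  apply this
  show pderiv (0 : Fin 6) (pderiv (0 : Fin 6) W) = 0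
  rw [hWz, map_zero]

end
end

section
/- Let F₀,…,F₅ be polynomials lying in the jacobian space JW_M of W_M := X₁X₂X₃X₄ − X₀X₃X₄X₅ and satisfying the symmetry conditions ∂Fᵢ/∂Xⱼ = ∂Fⱼ/∂Xᵢ for all 0 ≤ i, j ≤ 5. Then there exists a scalar λ ∈ ℂ such that Fᵢ = λ·∂W_M/∂Xᵢ for every i = 0,…,5. -/
open MvPolynomial

noncomputable section

set_option maxHeartbeats 4000000 in
/-- If `F₀,…,F₅ ∈ J W_M` satisfy `∂Fᵢ/∂Xⱼ = ∂Fⱼ/∂Xᵢ` for all `i, j`, then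
`Fᵢ = λ·∂W_M/∂Xᵢ` for some scalar `λ` and every `i`. -/
theorem stmt6 (F : Fin 6 → R6) (hmem : ∀ i : Fin 6, F i ∈ jacSpace WM)
    (hsym : ∀ i j : Fin 6, pderiv j (F i) = pderiv i (F j)) :
    ∃ lam : ℂ, ∀ i : Fin 6, F i = lam • pderiv i WM := by
  classical
  have hc : ∀ i, ∃ cf : Fin 6 → ℂ, (∑ j, cf j • pderiv j WM) = F i := fun i =>
    (Submodule.mem_span_range_iff_exists_fun ℂ).mp (hmem i)
  choose c hc using hc
  have key : ∀ i j a b : Fin 6,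
      constantCoeff (pderiv a (pderiv b (pderiv j (∑ k, c i k • pderiv k WM)))) =
      constantCoeff (pderiv a (pderiv b (pderiv i (∑ k, c j k • pderiv k WM)))) := by
    intro i j a b
    rw [hc i, hc j, hsym i j]
  have h01 : c 0 1 = 0 := by
    have h := key 0 3 2 4
    simp [WM, Fin.sum_univ_six, pderiv_mul, pderiv_X, smul_eq_C_mul] at h
    first
    | linear_combination h
    | linear_combination -h
    | exact h
    | exact h.symm
  have h02 : c 0 2 = 0 := by
    have h := key 0 3 1 4
    simp [WM, Fin.sum_univ_six, pderiv_mul, pderiv_X, smul_eq_C_mul] at h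
    first
    | linear_combination h
    | linear_combination -h
    | exact h
    | exact h.symm
  have h03 : c 0 3 = 0 := by
    have h := key 0 1 2 4
    simp [WM, Fin.sum_univ_six, pderiv_mul, pderiv_X, smul_eq_C_mul] at h
    first
    | linear_combination h
    | linear_combination -h
    | exact h
    | exact h.symm
  have h04 : c 0 4 = 0 := by
    have h := key 0 1 2 3
    simp [WM, Fin.sum_univ_six, pderiv_mul, pderiv_X, smul_eq_C_mul] at h
    first
    | linear_combination h
    | linear_combination -h
    | exact h
    | exact h.symm
  have h05 : c 0 5 = 0 := by
    have h := key 0 3 0 4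
    simp [WM, Fin.sum_univ_six, pderiv_mul, pderiv_X, smul_eq_C_mul] at h
    first
    | linear_combination h
    | linear_combination -h
    | exact h
    | exact h.symm
  have h10 : c 1 0 = 0 := by
    have h := key 1 3 4 5
    simp [WM, Fin.sum_univ_six, pderiv_mul, pderiv_X, smul_eq_C_mul] at h
    first
    | linear_combination h
    | linear_combination -h
    | exact h
    | exact h.symm
  have h12 : c 1 2 = 0 := by
    have h := key 1 3 1 4
    simp [WM, Fin.sum_univ_six, pderiv_mul, pderiv_X, smul_eq_C_mul] at h
    first
    | linear_combination h
    | linear_combination -h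
    | exact h
    | exact h.symm
  have h13 : c 1 3 = 0 := by
    have h := key 0 1 4 5
    simp [WM, Fin.sum_univ_six, pderiv_mul, pderiv_X, smul_eq_C_mul] at h
    first
    | linear_combination h
    | linear_combination -h
    | exact h
    | exact h.symm
  have h14 : c 1 4 = 0 := by
    have h := key 0 1 3 5
    simp [WM, Fin.sum_univ_six, pderiv_mul, pderiv_X, smul_eq_C_mul] at h
    first
    | linear_combination h
    | linear_combination -h
    | exact h
    | exact h.symm
  have h15 : c 1 5 = 0 := by
    have h := key 1 3 0 4
    simp [WM, Fin.sum_univ_six, pderiv_mul, pderiv_X, smul_eq_C_mul] at h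
    first
    | linear_combination h
    | linear_combination -h
    | exact h
    | exact h.symm
  have h20 : c 2 0 = 0 := by
    have h := key 2 3 4 5
    simp [WM, Fin.sum_univ_six, pderiv_mul, pderiv_X, smul_eq_C_mul] at h
    first
    | linear_combination h
    | linear_combination -h
    | exact h
    | exact h.symm
  have h21 : c 2 1 = 0 := by
    have h := key 2 3 2 4
    simp [WM, Fin.sum_univ_six, pderiv_mul, pderiv_X, smul_eq_C_mul] at h
    first
    | linear_combination h
    | linear_combination -h
    | exact h
    | exact h.symm
  have h23 : c 2 3 = 0 := by
    have h := key 0 2 4 5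
    simp [WM, Fin.sum_univ_six, pderiv_mul, pderiv_X, smul_eq_C_mul] at h
    first
    | linear_combination h
    | linear_combination -h
    | exact h
    | exact h.symm
  have h24 : c 2 4 = 0 := by
    have h := key 0 2 3 5
    simp [WM, Fin.sum_univ_six, pderiv_mul, pderiv_X, smul_eq_C_mul] at h
    first
    | linear_combination h
    | linear_combination -h
    | exact h
    | exact h.symm
  have h25 : c 2 5 = 0 := by
    have h := key 2 3 0 4
    simp [WM, Fin.sum_univ_six, pderiv_mul, pderiv_X, smul_eq_C_mul] at h
    first
    | linear_combination h
    | linear_combination -h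
    | exact h
    | exact h.symm
  have h30 : c 3 0 = 0 := by
    have h := key 3 5 3 4
    simp [WM, Fin.sum_univ_six, pderiv_mul, pderiv_X, smul_eq_C_mul] at h
    first
    | linear_combination h
    | linear_combination -h
    | exact h
    | exact h.symm
  have h31 : c 3 1 = 0 := by
    have h := key 2 3 3 4
    simp [WM, Fin.sum_univ_six, pderiv_mul, pderiv_X, smul_eq_C_mul] at h
    first
    | linear_combination h
    | linear_combination -h
    | exact h
    | exact h.symm
  have h32 : c 3 2 = 0 := by
    have h := key 1 3 3 4
    simp [WM, Fin.sum_univ_six, pderiv_mul, pderiv_X, smul_eq_C_mul] at h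
    first
    | linear_combination h
    | linear_combination -h
    | exact h
    | exact h.symm
  have h34 : c 3 4 = 0 := by
    have h := key 0 3 3 5
    simp [WM, Fin.sum_univ_six, pderiv_mul, pderiv_X, smul_eq_C_mul] at h
    first
    | linear_combination h
    | linear_combination -h
    | exact h
    | exact h.symm
  have h35 : c 3 5 = 0 := by
    have h := key 0 3 3 4
    simp [WM, Fin.sum_univ_six, pderiv_mul, pderiv_X, smul_eq_C_mul] at h
    first
    | linear_combination h
    | linear_combination -h
    | exact h
    | exact h.symm
  have h40 : c 4 0 = 0 := by
    have h := key 4 5 3 4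
    simp [WM, Fin.sum_univ_six, pderiv_mul, pderiv_X, smul_eq_C_mul] at h
    first
    | linear_combination h
    | linear_combination -h
    | exact h
    | exact h.symm
  have h41 : c 4 1 = 0 := by
    have h := key 2 4 3 4
    simp [WM, Fin.sum_univ_six, pderiv_mul, pderiv_X, smul_eq_C_mul] at h
    first
    | linear_combination h
    | linear_combination -h
    | exact h
    | exact h.symm
  have h42 : c 4 2 = 0 := by
    have h := key 1 4 3 4
    simp [WM, Fin.sum_univ_six, pderiv_mul, pderiv_X, smul_eq_C_mul] at h
    first
    | linear_combination h
    | linear_combination -h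
    | exact h
    | exact h.symm
  have h43 : c 4 3 = 0 := by
    have h := key 0 4 4 5
    simp [WM, Fin.sum_univ_six, pderiv_mul, pderiv_X, smul_eq_C_mul] at h
    first
    | linear_combination h
    | linear_combination -h
    | exact h
    | exact h.symm
  have h45 : c 4 5 = 0 := by
    have h := key 0 4 3 4
    simp [WM, Fin.sum_univ_six, pderiv_mul, pderiv_X, smul_eq_C_mul] at h
    first
    | linear_combination h
    | linear_combination -h
    | exact h
    | exact h.symm
  have h50 : c 5 0 = 0 := by
    have h := key 4 5 3 5
    simp [WM, Fin.sum_univ_six, pderiv_mul, pderiv_X, smul_eq_C_mul] at h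
    first
    | linear_combination h
    | linear_combination -h
    | exact h
    | exact h.symm
  have h51 : c 5 1 = 0 := by
    have h := key 4 5 2 3
    simp [WM, Fin.sum_univ_six, pderiv_mul, pderiv_X, smul_eq_C_mul] at h
    first
    | linear_combination h
    | linear_combination -h
    | exact h
    | exact h.symm
  have h52 : c 5 2 = 0 := by
    have h := key 4 5 1 3
    simp [WM, Fin.sum_univ_six, pderiv_mul, pderiv_X, smul_eq_C_mul] at h
    first
    | linear_combination h
    | linear_combination -h
    | exact h
    | exact h.symm
  have h53 : c 5 3 = 0 := by
    have h := key 4 5 0 5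
    simp [WM, Fin.sum_univ_six, pderiv_mul, pderiv_X, smul_eq_C_mul] at h
    first
    | linear_combination h
    | linear_combination -h
    | exact h
    | exact h.symm
  have h54 : c 5 4 = 0 := by
    have h := key 0 5 3 5
    simp [WM, Fin.sum_univ_six, pderiv_mul, pderiv_X, smul_eq_C_mul] at h
    first
    | linear_combination h
    | linear_combination -h
    | exact h
    | exact h.symm
  have d0 : c 0 0 = c 5 5 := by
    have h := key 0 5 3 4
    simp [WM, Fin.sum_univ_six, pderiv_mul, pderiv_X, smul_eq_C_mul] at h
    first
    | linear_combination h
    | linear_combination -h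
    | exact h
    | exact h.symm
  have d3 : c 3 3 = c 5 5 := by
    have h := key 3 5 0 4
    simp [WM, Fin.sum_univ_six, pderiv_mul, pderiv_X, smul_eq_C_mul] at h
    first
    | linear_combination h
    | linear_combination -h
    | exact h
    | exact h.symm
  have d4 : c 4 4 = c 5 5 := by
    have h := key 4 5 0 3
    simp [WM, Fin.sum_univ_six, pderiv_mul, pderiv_X, smul_eq_C_mul] at h
    first
    | linear_combination h
    | linear_combination -h
    | exact h
    | exact h.symm
  have d1 : c 1 1 = c 3 3 := by
    have h := key 1 3 2 4
    simp [WM, Fin.sum_univ_six, pderiv_mul, pderiv_X, smul_eq_C_mul] at h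
    first
    | linear_combination h
    | linear_combination -h
    | exact h
    | exact h.symm
  have d2 : c 2 2 = c 4 4 := by
    have h := key 2 4 1 3
    simp [WM, Fin.sum_univ_six, pderiv_mul, pderiv_X, smul_eq_C_mul] at h
    first
    | linear_combination h
    | linear_combination -h
    | exact h
    | exact h.symm
  have hf0 : F 0 = c 5 5 • pderiv 0 WM := by
    rw [← hc 0, Fin.sum_univ_six, h01, h02, h03, h04, h05, d0]
    simp
  have hf1 : F 1 = c 5 5 • pderiv 1 WM := by
    rw [← hc 1, Fin.sum_univ_six, h10, h12, h13, h14, h15, d1, d3]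
    simp
  have hf2 : F 2 = c 5 5 • pderiv 2 WM := by
    rw [← hc 2, Fin.sum_univ_six, h20, h21, h23, h24, h25, d2, d4]
    simp
  have hf3 : F 3 = c 5 5 • pderiv 3 WM := by
    rw [← hc 3, Fin.sum_univ_six, h30, h31, h32, h34, h35, d3]
    simp
  have hf4 : F 4 = c 5 5 • pderiv 4 WM := by
    rw [← hc 4, Fin.sum_univ_six, h40, h41, h42, h43, h45, d4]
    simp
  have hf5 : F 5 = c 5 5 • pderiv 5 WM := by
    rw [← hc 5, Fin.sum_univ_six, h50, h51, h52, h53, h54]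
    simp
  exact ⟨c 5 5, fun i => by fin_cases i <;> [exact hf0; exact hf1; exact hf2; exact hf3; exact hf4; exact hf5]⟩

end
end

section
/- Let W be a quartic form in ℂ[X₀,…,X₅] whose six first partial derivatives are linearly independent, and let ∂ : JW ⊗ ℂ⁶ → Q be the ℂ-linear map sending F ⊗ a to Σᵢ aᵢ·∂F/∂Xᵢ, where Q is the 21-dimensional space of quadratic forms. If ∂ is surjective, then the kernel of ∂ has dimension 15 and equals the ℂ-linear span of the 15 tensors (∂W/∂Xⱼ) ⊗ eᵢ − (∂W/∂Xᵢ) ⊗ eⱼ, for 0 ≤ i < j ≤ 5. -/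
set_option synthInstance.maxHeartbeats 1000000
set_option maxHeartbeats 1000000

open MvPolynomial
open scoped TensorProduct

noncomputable section

/-- The map `∂ : JW ⊗ ℂ⁶ → ℂ[X₀,…,X₅]` sending `F ⊗ a` to `Σᵢ aᵢ·∂F/∂Xᵢ`. -/
def jTensor (W : R6) : TensorProduct ℂ (jacSpace W) (Fin 6 → ℂ) →ₗ[ℂ] R6 :=
  TensorProduct.lift
    { toFun := fun F =>
        { toFun := fun a => ∑ i : Fin 6, a i • pderiv i (F : R6)
          map_add' := fun a b => by
            simp [add_smul, Finset.sum_add_distrib]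
          map_smul' := fun c a => by
            simp [Finset.smul_sum, mul_smul] }
      map_add' := fun F F' => by
        ext a
        simp [smul_add, Finset.sum_add_distrib]
      map_smul' := fun c F => LinearMap.ext fun a => by
        show ∑ i : Fin 6, a i • pderiv i ((c • F : jacSpace W) : R6) =
          c • ∑ i : Fin 6, a i • pderiv i (F : R6)
        rw [Finset.smul_sum]
        refine Finset.sum_congr rfl fun i _ => ?_
        rw [Submodule.coe_smul, Derivation.map_smul, smul_comm] }

instance instACG (W : R6) (S : Submodule ℂ (TensorProduct ℂ (jacSpace W) (Fin 6 → ℂ))) :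
    AddCommGroup S :=
  @Submodule.addCommGroup ℂ (TensorProduct ℂ (jacSpace W) (Fin 6 → ℂ)) _ _ _ S

instance instMod (W : R6) (S : Submodule ℂ (TensorProduct ℂ (jacSpace W) (Fin 6 → ℂ))) :
    Module ℂ S :=
  @Submodule.module ℂ (TensorProduct ℂ (jacSpace W) (Fin 6 → ℂ)) _ _ _ S

/-- The `i`-th partial derivative of `W`, as an element of `J W`. -/
def dW (W : R6) (i : Fin 6) : jacSpace W :=
  ⟨pderiv i W, Submodule.subset_span (Set.mem_range_self i)⟩


set_option maxHeartbeats 4000000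

lemma pderiv_comm'_s13 {σ : Type*} [DecidableEq σ] (i j : σ) (f : MvPolynomial σ ℂ) :
    pderiv i (pderiv j f) = pderiv j (pderiv i f) := by
  by_cases h : i = j
  · subst h; rfl
  · induction f using MvPolynomial.induction_on' with
    | add p q hp hq => simp [hp, hq]
    | monomial s a =>
        rw [pderiv_monomial, pderiv_monomial, pderiv_monomial, pderiv_monomial,
          Finsupp.tsub_apply, Finsupp.tsub_apply,
          Finsupp.single_eq_of_ne h, Finsupp.single_eq_of_ne (Ne.symm h),
          tsub_zero, tsub_zero, tsub_right_comm, mul_right_comm]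

def degEquivSym : {d : Fin 6 →₀ ℕ // d.degree = 2} ≃ Sym (Fin 6) 2 where
  toFun d := ⟨Finsupp.toMultiset d.1, by
    rw [Finsupp.card_toMultiset]; exact d.2⟩
  invFun m := ⟨Multiset.toFinsupp (m : Multiset (Fin 6)), by
    show ((m : Multiset (Fin 6)).toFinsupp).sum (fun _ => id) = 2
    rw [Multiset.toFinsupp_sum_eq]; exact m.2⟩
  left_inv d := Subtype.ext (Finsupp.toMultiset_toFinsupp d.1)
  right_inv m := Subtype.ext (Multiset.toFinsupp_toMultiset (m : Multiset (Fin 6)))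

instance fintypeDeg2 : Fintype {d : Fin 6 →₀ ℕ // d.degree = 2} :=
  Fintype.ofEquiv _ degEquivSym.symm

instance fintypeDeg2' : Fintype ↥({d | d.degree = 2} : Set (Fin 6 →₀ ℕ)) := fintypeDeg2

lemma card_deg2 : Fintype.card {d : Fin 6 →₀ ℕ // d.degree = 2} = 21 := by
  rw [Fintype.card_congr degEquivSym, Sym.card_sym_eq_multichoose, Fintype.card_fin,
    Nat.multichoose_eq]
  rfl

lemma finrank_quadrics :
    Module.finrank ℂ ↥(homogeneousSubmodule (Fin 6) ℂ 2) = 21 := by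
  rw [homogeneousSubmodule_eq_finsupp_supported,
    LinearEquiv.finrank_eq (AddMonoidAlgebra.supportedEquivFinsupp (R := ℂ) (S := ℂ) ({d | d.degree = 2} : Set (Fin 6 →₀ ℕ))),
    Module.finrank_finsupp_self, ← card_deg2]
  rfl

lemma jTensor_tmul (W : R6) (F : jacSpace W) (a : Fin 6 → ℂ) :
    jTensor W (F ⊗ₜ[ℂ] a) = ∑ i : Fin 6, a i • pderiv i (F : R6) := rfl

lemma jTensor_single (W : R6) (F : jacSpace W) (i : Fin 6) :
    jTensor W (F ⊗ₜ[ℂ] (Pi.single i 1 : Fin 6 → ℂ)) = pderiv i (F : R6) := by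
  rw [jTensor_tmul]
  simp [Pi.single_apply, ite_smul]

lemma submodule_eq_of_le_of_finrank_eq' {K V : Type*} [DivisionRing K] [AddCommGroup V]
    [Module K V] (S₁ S₂ : Submodule K V) (hfd : FiniteDimensional K S₂) (hle : S₁ ≤ S₂)
    (h : Module.finrank K S₁ = Module.finrank K S₂) : S₂ = S₁ :=
  (Submodule.eq_of_le_of_finrank_eq hle h).symm

lemma card_pairs : Fintype.card {p : Fin 6 × Fin 6 // p.1 < p.2} = 15 := by decide

/-- If the first partials of `W` are independent and `∂ : JW ⊗ ℂ⁶ → Q` is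
surjective onto the space `Q` of quadratic forms, then `ker ∂` has dimension 15
and is spanned by the tensors `(∂W/∂Xⱼ) ⊗ eᵢ − (∂W/∂Xᵢ) ⊗ eⱼ`, `i < j`. -/
theorem stmt13 (W : R6) (hW : W.IsHomogeneous 4)
    (hind : LinearIndependent ℂ (fun i : Fin 6 => pderiv i W))
    (hsurj : LinearMap.range (jTensor W) = homogeneousSubmodule (Fin 6) ℂ 2) :
    Module.finrank ℂ (LinearMap.ker (jTensor W)) = 15 ∧
    LinearMap.ker (jTensor W) =
      Submodule.span ℂ (Set.range fun p : {p : Fin 6 × Fin 6 // p.1 < p.2} =>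
        dW W p.1.2 ⊗ₜ[ℂ] (Pi.single p.1.1 1 : Fin 6 → ℂ) -
        dW W p.1.1 ⊗ₜ[ℂ] (Pi.single p.1.2 1 : Fin 6 → ℂ)) := by
  haveI : Module.Finite ℂ (jacSpace W) :=
    FiniteDimensional.span_of_finite ℂ (Set.finite_range _)
  haveI : Module.Finite ℂ (TensorProduct ℂ (jacSpace W) (Fin 6 → ℂ)) :=
    Module.Finite.tensorProduct ℂ _ _
  set B : Module.Basis (Fin 6) ℂ (jacSpace W) := Module.Basis.span hind with hBdef
  have hB : ∀ i, B i = dW W i := fun i => (Module.Basis.span_apply hind i)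
  set T : Module.Basis (Fin 6 × Fin 6) ℂ (TensorProduct ℂ (jacSpace W) (Fin 6 → ℂ)) :=
    B.tensorProduct (Pi.basisFun ℂ (Fin 6)) with hTdef
  have hT : ∀ i j : Fin 6, T (i, j) = dW W i ⊗ₜ[ℂ] (Pi.single j 1 : Fin 6 → ℂ) := by
    intro i j
    rw [hTdef, Module.Basis.tensorProduct_apply, hB, Pi.basisFun_apply]
  set v : {p : Fin 6 × Fin 6 // p.1 < p.2} → TensorProduct ℂ (jacSpace W) (Fin 6 → ℂ) :=
    fun p => dW W p.1.2 ⊗ₜ[ℂ] (Pi.single p.1.1 1 : Fin 6 → ℂ) -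
      dW W p.1.1 ⊗ₜ[ℂ] (Pi.single p.1.2 1 : Fin 6 → ℂ) with hvdef
  have hvT : ∀ p, v p = T (p.1.2, p.1.1) - T (p.1.1, p.1.2) := by
    intro p; rw [hvdef, hT, hT]
  -- dimension of the kernel
  have hdom : Module.finrank ℂ (TensorProduct ℂ (jacSpace W) (Fin 6 → ℂ)) = 36 := by
    rw [Module.finrank_tensorProduct]
    have h1 : Module.finrank ℂ (jacSpace W) = 6 := by
      have := finrank_span_eq_card hind
      exact this
    rw [h1]
    simp
  have hker : Module.finrank ℂ (LinearMap.ker (jTensor W)) = 15 := by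
    have hrn := LinearMap.finrank_range_add_finrank_ker (K := ℂ)
      (V := TensorProduct ℂ (jacSpace W) (Fin 6 → ℂ)) (f := jTensor W)
    rw [hdom, hsurj, finrank_quadrics] at hrn
    rw [show (36 : ℕ) = 21 + 15 from rfl] at hrn
    exact Nat.add_left_cancel hrn
  refine ⟨hker, ?_⟩
  -- the generators lie in the kernel
  have hmem : ∀ p, v p ∈ LinearMap.ker (jTensor W) := by
    intro p
    rw [LinearMap.mem_ker, hvdef]
    simp only [map_sub, jTensor_single]
    exact sub_eq_zero_of_eq (pderiv_comm'_s13 _ _ _)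
  -- the generators are linearly independent
  have hvind : LinearIndependent ℂ v := by
    refine (Fintype.linearIndependent_iff (v := v)).mpr fun g hg p => ?_
    obtain ⟨⟨i, j⟩, hij⟩ := p
    have hrepr : ∀ q : {p : Fin 6 × Fin 6 // p.1 < p.2},
        T.repr (v q) (i, j) = if q = ⟨(i, j), hij⟩ then -1 else 0 := by
      intro q
      rw [hvT, map_sub, Finsupp.sub_apply, Module.Basis.repr_self, Module.Basis.repr_self,
        Finsupp.single_apply, Finsupp.single_apply]
      have h1 : ¬ ((q.1.2, q.1.1) = (i, j)) := by
        rintro ⟨⟩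
        exact absurd hij (not_lt.mpr (le_of_lt q.2))
      have h2 : ((q.1.1, q.1.2) = (i, j)) ↔ q = ⟨(i, j), hij⟩ := by
        constructor
        · intro h; exact Subtype.ext (by simpa [Prod.ext_iff] using h)
        · intro h; rw [h]
      rw [if_neg h1]
      by_cases h : q = ⟨(i, j), hij⟩
      · rw [if_pos (h2.mpr h), if_pos h]; ring
      · rw [if_neg (fun hh => h (h2.mp hh)), if_neg h]; ring
    have := congrArg (fun x => T.repr x (i, j)) hg
    simp only [map_sum, map_smul, Finsupp.coe_finset_sum, Finset.sum_apply,
      Finsupp.smul_apply, map_zero, Finsupp.coe_zero, Pi.zero_apply] at this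
    rw [Finset.sum_congr rfl (fun q _ => by rw [hrepr q])] at this
    simp only [smul_eq_mul, mul_ite, mul_neg_one, mul_zero,
      Finset.sum_ite_eq' Finset.univ] at this
    simpa using this
  -- span = ker by dimension count
  have hle : Submodule.span ℂ (Set.range v) ≤ LinearMap.ker (jTensor W) := by
    rw [Submodule.span_le]
    rintro x ⟨p, rfl⟩
    exact hmem p
  have hfr := finrank_span_eq_card (R := ℂ) (b := v) hvind
  rw [card_pairs] at hfr
  haveI hfd : FiniteDimensional ℂ (LinearMap.ker (jTensor W)) :=
    FiniteDimensional.finiteDimensional_submodule (K := ℂ)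
      (V := TensorProduct ℂ (jacSpace W) (Fin 6 → ℂ)) _
  exact submodule_eq_of_le_of_finrank_eq' (K := ℂ)
    (V := TensorProduct ℂ (jacSpace W) (Fin 6 → ℂ)) _ _ hfd hle (hfr.trans hker.symm)

end
end
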